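/- Let p be a prime and write t = Σ_λ t_λ p^λ in base p. Then Π_λ C(m + t_λ, t_λ) ≤ C(m + t, t), with equality if and only if every multinomial coefficient t!/(e_0!···e_m!) with e_0 + ... + e_m = t is coprime to p. -/

import Mathlib

open Finset

-- L1
lemma sum_digits_mod {p : ℕ} (hp : 2 ≤ p) : ∀ (N : ℕ) (x : ℕ),
    ∑ l ∈ range N, (x / p ^ l % p) * p ^ l = x % p ^ N := by
  intro N
  induction N with
  | zero => intro x; simp [Nat.mod_one]
  | succ N ih =>
    intro x
    rw [sum_range_succ, ih, pow_succ, Nat.mod_mul]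
    ring

-- L2
lemma sum_lt_pow {p : ℕ} (hp : 2 ≤ p) {N : ℕ} {g : ℕ → ℕ} (hg : ∀ l < N, g l < p) :
    ∑ l ∈ range N, g l * p ^ l < p ^ N := by
  induction N with
  | zero => simpa using Nat.one_pos
  | succ N ih =>
    rw [sum_range_succ, pow_succ]
    have h1 : ∑ l ∈ range N, g l * p ^ l < p ^ N :=
      ih fun l hl => hg l (hl.trans (Nat.lt_succ_self _))
    have h2 : g N * p ^ N ≤ (p - 1) * p ^ N :=
      Nat.mul_le_mul_right _ (Nat.le_sub_one_of_lt (hg N (Nat.lt_succ_self _)))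
    calc ∑ l ∈ range N, g l * p ^ l + g N * p ^ N
        < p ^ N + (p - 1) * p ^ N := Nat.add_lt_add_of_lt_of_le h1 h2
      _ = (1 + (p - 1)) * p ^ N := by ring
      _ = p ^ N * p := by
          rw [Nat.add_sub_cancel' (by omega : 1 ≤ p)]; ring

-- L3
lemma digit_of_sum {p : ℕ} (hp : 2 ≤ p) {N : ℕ} {g : ℕ → ℕ} (hg : ∀ l < N, g l < p)
    {l' : ℕ} (hl' : l' < N) :
    (∑ l ∈ range N, g l * p ^ l) / p ^ l' % p = g l' := by
  have hsplit : ∑ l ∈ range N, g l * p ^ l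
      = ∑ l ∈ range l', g l * p ^ l + ∑ l ∈ Ico l' N, g l * p ^ l := by
    rw [range_eq_Ico, ← Finset.sum_Ico_consecutive _ (Nat.zero_le l') hl'.le, range_eq_Ico]
  have hk : N - l' = (N - l' - 1) + 1 := by omega
  have hIco : ∑ l ∈ Ico l' N, g l * p ^ l
      = p ^ l' * (g l' + p * ∑ l ∈ range (N - l' - 1), g (l' + l + 1) * p ^ l) := by
    rw [Finset.sum_Ico_eq_sum_range, hk, Finset.sum_range_succ']
    rw [mul_add, Finset.mul_sum]
    simp only [Nat.add_sub_cancel]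
    rw [add_comm]
    congr 1
    · simp [pow_add]; ring
    · rw [Finset.mul_sum]
      apply Finset.sum_congr rfl
      intro l _
      rw [pow_add, pow_succ]
      ring
  have hA : ∑ l ∈ range l', g l * p ^ l < p ^ l' :=
    sum_lt_pow hp fun l hl => hg l (hl.trans hl')
  rw [hsplit, hIco, Nat.add_mul_div_left _ _ (pow_pos (by omega : 0 < p) l'),
    Nat.div_eq_of_lt hA, Nat.zero_add, Nat.add_mul_mod_self_left,
    Nat.mod_eq_of_lt (hg l' hl')]

-- L4
lemma digits_getD {p : ℕ} (hp : 2 ≤ p) : ∀ (x l : ℕ), (Nat.digits p x).getD l 0 = x / p ^ l % p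
  | 0, l => by simp
  | (x + 1), l => by
    rw [Nat.digits_def' hp (Nat.succ_pos x)]
    cases l with
    | zero => simp
    | succ l =>
      have : (x + 1) / p < x + 1 := Nat.div_lt_self (Nat.succ_pos x) (by omega)
      simp only [List.getD_cons_succ]
      rw [digits_getD hp ((x + 1) / p) l, Nat.div_div_eq_div_mul, ← pow_succ']

-- L5
lemma sum_div_le {ι : Type*} (s : Finset ι) (f : ι → ℕ) (c : ℕ) :
    ∑ j ∈ s, f j / c ≤ (∑ j ∈ s, f j) / c := by
  induction s using Finset.cons_induction with
  | empty => simp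
  | cons a s ha ih =>
    rw [Finset.sum_cons, Finset.sum_cons]
    exact le_trans (Nat.add_le_add_left ih _) (Nat.add_div_le_add_div _ _ _)

-- L8
lemma card_adt : ∀ (k n : ℕ), (Finset.Nat.antidiagonalTuple (k + 1) n).card = (n + k).choose k
  | 0, n => by
    have : (Finset.Nat.antidiagonalTuple 1 n) = {![n]} := by
      ext x
      rw [Finset.Nat.mem_antidiagonalTuple]
      simp [Fin.sum_univ_one, Finset.mem_singleton]
      constructor
      · intro h; funext i; fin_cases i; simpa using h
      · intro h; rw [h]; simp
    rw [this]
    simp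
  | (k + 1), n => by
    classical
    -- bijection with sigma
    have hcard : (Finset.Nat.antidiagonalTuple (k + 2) n).card
        = ∑ ab ∈ Finset.HasAntidiagonal.antidiagonal n, (Finset.Nat.antidiagonalTuple (k + 1) ab.2).card := by
      rw [← Finset.card_sigma]
      apply Finset.card_nbij' (fun e => ⟨(e 0, ∑ i, Fin.tail e i), Fin.tail e⟩)
        (fun x => Fin.cons x.1.1 x.2)
      · intro e he
        rw [Finset.mem_coe, Finset.Nat.mem_antidiagonalTuple] at he
        rw [Finset.mem_coe, Finset.mem_sigma]
        refine ⟨?_, Finset.Nat.mem_antidiagonalTuple.mpr rfl⟩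
        rw [Finset.HasAntidiagonal.mem_antidiagonal]
        rw [← he, Fin.sum_univ_succ]
        simp [Fin.tail, Fin.sum_univ_succ]
      · intro x hx
        rw [Finset.mem_coe, Finset.mem_sigma, Finset.HasAntidiagonal.mem_antidiagonal, Finset.Nat.mem_antidiagonalTuple] at hx
        rw [Finset.mem_coe, Finset.Nat.mem_antidiagonalTuple, Fin.sum_cons, hx.2, hx.1]
      · intro e _; simp [Fin.cons_self_tail]
      · intro x hx
        rw [Finset.mem_coe, Finset.mem_sigma, Finset.HasAntidiagonal.mem_antidiagonal, Finset.Nat.mem_antidiagonalTuple] at hx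
        simp only [Fin.cons_zero, Fin.tail_cons]
        congr 1
        rw [hx.2]
    rw [hcard]
    have : ∀ ab ∈ Finset.HasAntidiagonal.antidiagonal n,
        (Finset.Nat.antidiagonalTuple (k + 1) ab.2).card = (ab.2 + k).choose k := by
      intro ab _; exact card_adt k ab.2
    rw [Finset.sum_congr rfl this, Finset.Nat.sum_antidiagonal_eq_sum_range_succ (fun a b => (b + k).choose k)]
    have hrefl : ∑ i ∈ Finset.range (n + 1), (n - i + k).choose k
        = ∑ i ∈ Finset.range (n + 1), (i + k).choose k := by
      rw [← Finset.sum_range_reflect]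
      apply Finset.sum_congr rfl
      intro i hi
      rw [Finset.mem_range] at hi
      congr 2
      omega
    rw [hrefl]
    have hIcc : ∑ i ∈ Finset.range (n + 1), (i + k).choose k
        = ∑ i ∈ Finset.Icc k (n + k), i.choose k := by
      rw [← Finset.Ico_add_one_right_eq_Icc, Finset.sum_Ico_eq_sum_range]
      have : n + k + 1 - k = n + 1 := by omega
      rw [this]
      apply Finset.sum_congr rfl
      intro i _
      rw [add_comm k i]
    rw [hIcc, Nat.sum_Icc_choose, ← add_assoc]

lemma mod_p_eq {p : ℕ} (hp : 2 ≤ p) (x l : ℕ) :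
    x / p ^ l % p = x / p ^ l - p * (x / p ^ (l + 1)) := by
  rw [pow_succ, ← Nat.div_div_eq_div_mul]
  have := Nat.div_add_mod (x / p ^ l) p
  omega

lemma mul_div_le' {p : ℕ} (hp : 2 ≤ p) (x l : ℕ) :
    p * (x / p ^ (l + 1)) ≤ x / p ^ l := by
  rw [pow_succ, ← Nat.div_div_eq_div_mul]
  have := Nat.div_add_mod (x / p ^ l) p
  omega

lemma div_pow_decomp {p : ℕ} (hp : 2 ≤ p) (x l : ℕ) :
    x / p ^ l = p * (x / p ^ (l + 1)) + x / p ^ l % p := by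
  rw [pow_succ, ← Nat.div_div_eq_div_mul]
  exact (Nat.div_add_mod (x / p ^ l) p).symm

lemma t_lt_pow {p : ℕ} (hp : 2 ≤ p) (t i : ℕ) (hi : t + 1 ≤ i) : t < p ^ i := by
  calc t < 2 ^ (t + 1) := by
        have := Nat.lt_two_pow_self (n := t)
        have : (2:ℕ) ^ t ≤ 2 ^ (t + 1) := Nat.pow_le_pow_right (by omega) (by omega)
        omega
    _ ≤ p ^ (t + 1) := Nat.pow_le_pow_left hp _
    _ ≤ p ^ i := Nat.pow_le_pow_right (by omega) hi

lemma divs_iff_digits {p : ℕ} (hp : 2 ≤ p) {m t : ℕ} (e : Fin (m + 1) → ℕ)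
    (he : ∑ i, e i = t) :
    (∀ i, ∑ j, e j / p ^ i = t / p ^ i) ↔
      (∀ l, ∑ j, e j / p ^ l % p = t / p ^ l % p) := by
  have hej : ∀ j, e j ≤ t := fun j => he ▸ Finset.single_le_sum (fun _ _ => Nat.zero_le _) (Finset.mem_univ j)
  constructor
  · intro h l
    have h1 := h l
    have h2 := h (l + 1)
    calc ∑ j, e j / p ^ l % p
        = ∑ j, (e j / p ^ l - p * (e j / p ^ (l + 1))) := by
          exact Finset.sum_congr rfl fun j _ => mod_p_eq hp (e j) l
      _ = ∑ j, e j / p ^ l - ∑ j, p * (e j / p ^ (l + 1)) :=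
          Finset.sum_tsub_distrib _ fun j _ => mul_div_le' hp (e j) l
      _ = t / p ^ l - p * (t / p ^ (l + 1)) := by
          rw [h1, ← Finset.mul_sum, h2]
      _ = t / p ^ l % p := (mod_p_eq hp t l).symm
  · intro h
    have key : ∀ k i, t + 1 ≤ i + k → ∑ j, e j / p ^ i = t / p ^ i := by
      intro k
      induction k with
      | zero =>
        intro i hi
        simp only [Nat.add_zero] at hi
        have h1 : t / p ^ i = 0 := Nat.div_eq_of_lt (t_lt_pow hp t i hi)
        have h2 : ∀ j, e j / p ^ i = 0 := fun j =>
          Nat.div_eq_of_lt (lt_of_le_of_lt (hej j) (t_lt_pow hp t i hi))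
        rw [h1]
        exact Finset.sum_eq_zero fun j _ => h2 j
      | succ k ih =>
        intro i hi
        have hIH : ∑ j, e j / p ^ (i + 1) = t / p ^ (i + 1) := ih (i + 1) (by omega)
        calc ∑ j, e j / p ^ i
            = ∑ j, (p * (e j / p ^ (i + 1)) + e j / p ^ i % p) :=
              Finset.sum_congr rfl fun j _ => div_pow_decomp hp (e j) i
          _ = p * ∑ j, e j / p ^ (i + 1) + ∑ j, e j / p ^ i % p := by
              rw [Finset.sum_add_distrib, Finset.mul_sum]
          _ = p * (t / p ^ (i + 1)) + t / p ^ i % p := by rw [hIH, h i]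
          _ = t / p ^ i := (div_pow_decomp hp t i).symm
    exact fun i => key (t + 1) i (by omega)

lemma padic_prod {p : ℕ} [Fact p.Prime] {ι : Type*} (s : Finset ι) (f : ι → ℕ)
    (hf : ∀ i ∈ s, f i ≠ 0) :
    padicValNat p (∏ i ∈ s, f i) = ∑ i ∈ s, padicValNat p (f i) := by
  induction s using Finset.cons_induction with
  | empty => simp
  | cons a s ha ih =>
    rw [Finset.prod_cons, Finset.sum_cons,
      padicValNat.mul (hf a (Finset.mem_cons_self a s))
        (Finset.prod_ne_zero_iff.mpr fun i hi => hf i (Finset.mem_cons_of_mem hi)),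
      ih fun i hi => hf i (Finset.mem_cons_of_mem hi)]

lemma coprime_iff_divs {p : ℕ} (hp : p.Prime) {m t : ℕ} (ht : 1 ≤ t)
    (e : Fin (m + 1) → ℕ) (he : ∑ i, e i = t) :
    Nat.Coprime (Nat.multinomial Finset.univ e) p ↔
      ∀ i, ∑ j, e j / p ^ i = t / p ^ i := by
  haveI : Fact p.Prime := ⟨hp⟩
  have hp2 : 2 ≤ p := hp.two_le
  have hej : ∀ j, e j ≤ t := fun j =>
    he ▸ Finset.single_le_sum (fun _ _ => Nat.zero_le _) (Finset.mem_univ j)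
  set M := Nat.multinomial Finset.univ e with hM
  have hM0 : M ≠ 0 := (Nat.multinomial_pos _ _).ne'
  have hspec : (∏ i, Nat.factorial (e i)) * M = Nat.factorial t := by
    rw [hM, Nat.multinomial_spec, he]
  -- valuations
  have hval : padicValNat p (Nat.factorial t) = (∑ j, padicValNat p (Nat.factorial (e j))) + padicValNat p M := by
    rw [← hspec, padicValNat.mul (Finset.prod_ne_zero_iff.mpr fun i _ => (Nat.factorial_pos _).ne')
      hM0, padic_prod _ _ fun i _ => (Nat.factorial_pos _).ne']
  have hlegt : padicValNat p (Nat.factorial t) = ∑ i ∈ Finset.Ico 1 (t + 1), t / p ^ i :=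
    padicValNat_factorial (Nat.lt_succ_of_le (Nat.log_le_self _ _))
  have hlege : ∀ j, padicValNat p (Nat.factorial (e j)) = ∑ i ∈ Finset.Ico 1 (t + 1), e j / p ^ i := fun j =>
    padicValNat_factorial (Nat.lt_succ_of_le ((Nat.log_le_self _ _).trans (hej j)))
  have hsum : ∑ i ∈ Finset.Ico 1 (t + 1), t / p ^ i
      = (∑ i ∈ Finset.Ico 1 (t + 1), ∑ j, e j / p ^ i) + padicValNat p M := by
    rw [← hlegt, hval]
    congr 1
    rw [Finset.sum_congr rfl fun j (_ : j ∈ Finset.univ) => hlege j, Finset.sum_comm]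
  have hle : ∀ i ∈ Finset.Ico 1 (t + 1), ∑ j, e j / p ^ i ≤ t / p ^ i := by
    intro i _
    calc ∑ j, e j / p ^ i ≤ (∑ j, e j) / p ^ i := sum_div_le _ _ _
      _ = t / p ^ i := by rw [he]
  have hiff0 : Nat.Coprime M p ↔ padicValNat p M = 0 := by
    rw [Nat.coprime_comm, hp.coprime_iff_not_dvd, padicValNat.eq_zero_iff]
    constructor
    · intro h; exact Or.inr (Or.inr h)
    · rintro (h | h | h)
      · omega
      · exact absurd h hM0
      · exact h
  rw [hiff0]
  constructor
  · intro h0 i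
    have heq : ∑ i ∈ Finset.Ico 1 (t + 1), ∑ j, e j / p ^ i
        = ∑ i ∈ Finset.Ico 1 (t + 1), t / p ^ i := by omega
    have hterm := (Finset.sum_eq_sum_iff_of_le hle).mp heq
    rcases Nat.eq_zero_or_pos i with rfl | hi1
    · simpa using he
    rcases Nat.lt_or_ge i (t + 1) with hi2 | hi2
    · exact hterm i (Finset.mem_Ico.mpr ⟨hi1, hi2⟩)
    · have h1 : t / p ^ i = 0 := Nat.div_eq_of_lt (t_lt_pow hp2 t i hi2)
      have h2 : ∀ j, e j / p ^ i = 0 := fun j =>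
        Nat.div_eq_of_lt (lt_of_le_of_lt (hej j) (t_lt_pow hp2 t i hi2))
      rw [h1]
      exact Finset.sum_eq_zero fun j _ => h2 j
  · intro h
    have : ∑ i ∈ Finset.Ico 1 (t + 1), ∑ j, e j / p ^ i
        = ∑ i ∈ Finset.Ico 1 (t + 1), t / p ^ i :=
      Finset.sum_congr rfl fun i _ => h i
    omega

/-- Π_λ C(m + t_λ, t_λ) ≤ C(m + t, t), where t_λ are the base-p digits of t, with
equality iff every multinomial coefficient t!/(e_0!⋯e_m!), Σ e_i = t, is coprime to p. -/
theorem stmt15 (p : ℕ) (hp : p.Prime) (t m : ℕ) (ht : 1 ≤ t) :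
    (∏ l ∈ Finset.range (t + 1),
        (m + (Nat.digits p t).getD l 0).choose ((Nat.digits p t).getD l 0))
      ≤ (m + t).choose t ∧
    ((∏ l ∈ Finset.range (t + 1),
        (m + (Nat.digits p t).getD l 0).choose ((Nat.digits p t).getD l 0))
      = (m + t).choose t ↔
        ∀ e : Fin (m + 1) → ℕ, ∑ i, e i = t →
          Nat.Coprime (Nat.multinomial Finset.univ e) p) := by
  classical
  have hp2 : 2 ≤ p := hp.two_le
  set d : ℕ → ℕ := fun l => t / p ^ l % p with hd
  set S : Finset (Fin (m + 1) → ℕ) := Finset.Nat.antidiagonalTuple (m + 1) t with hS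
  set T : Finset (Fin (m + 1) → ℕ) :=
    S.filter (fun e => ∀ l < t + 1, ∑ j, e j / p ^ l % p = d l) with hT
  -- rewrite the product using digits_getD
  have hprod0 : (∏ l ∈ Finset.range (t + 1),
      (m + (Nat.digits p t).getD l 0).choose ((Nat.digits p t).getD l 0))
      = ∏ l ∈ Finset.range (t + 1), (m + d l).choose (d l) := by
    apply Finset.prod_congr rfl
    intro l _
    rw [digits_getD hp2 t l]
  -- card S
  have hcardS : S.card = (m + t).choose t := by
    rw [hS, card_adt m t, add_comm t m, Nat.choose_symm_add]
  -- card T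
  have hcardT : T.card = ∏ l ∈ Finset.range (t + 1), (m + d l).choose (d l) := by
    have hbij : T.card = (Fintype.piFinset
        (fun l : Fin (t + 1) => Finset.Nat.antidiagonalTuple (m + 1) (d l))).card := by
      apply Finset.card_nbij'
        (i := fun e => fun (l : Fin (t + 1)) (j : Fin (m + 1)) => e j / p ^ (l : ℕ) % p)
        (j := fun f => fun j => ∑ l ∈ Finset.range (t + 1),
          (if h : l < t + 1 then f ⟨l, h⟩ j else 0) * p ^ l)
      · intro e he
        rw [Finset.mem_coe, hT, Finset.mem_filter] at he
        rw [Finset.mem_coe, Fintype.mem_piFinset]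
        intro l
        rw [Finset.Nat.mem_antidiagonalTuple]
        exact he.2 l l.isLt
      · intro f hf
        rw [Finset.mem_coe, Fintype.mem_piFinset] at hf
        have hfsum : ∀ l : Fin (t + 1), ∑ j, f l j = d l := fun l =>
          Finset.Nat.mem_antidiagonalTuple.mp (hf l)
        have hflt : ∀ (l : ℕ) (j : Fin (m + 1)),
            (if h : l < t + 1 then f ⟨l, h⟩ j else 0) < p := by
          intro l j
          split
          · next h =>
            calc f ⟨l, h⟩ j ≤ ∑ j', f ⟨l, h⟩ j' :=
                  Finset.single_le_sum (fun _ _ => Nat.zero_le _) (Finset.mem_univ j)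
              _ = d l := hfsum ⟨l, h⟩
              _ < p := Nat.mod_lt _ (by omega)
          · omega
        have hdig : ∀ (j : Fin (m + 1)) (l : ℕ) (hl : l < t + 1),
            (∑ l' ∈ Finset.range (t + 1),
              (if h : l' < t + 1 then f ⟨l', h⟩ j else 0) * p ^ l') / p ^ l % p
              = f ⟨l, hl⟩ j := by
          intro j l hl
          rw [digit_of_sum hp2 (fun l' _ => hflt l' j) hl, dif_pos hl]
        have hsumval : (∑ j, ∑ l ∈ Finset.range (t + 1),
            (if h : l < t + 1 then f ⟨l, h⟩ j else 0) * p ^ l) = t := by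
          rw [Finset.sum_comm]
          have : ∀ l ∈ Finset.range (t + 1),
              (∑ j, (if h : l < t + 1 then f ⟨l, h⟩ j else 0) * p ^ l) = d l * p ^ l := by
            intro l hl
            rw [Finset.mem_range] at hl
            rw [← Finset.sum_mul]
            congr 1
            rw [← hfsum ⟨l, hl⟩]
            apply Finset.sum_congr rfl
            intro j _
            rw [dif_pos hl]
          rw [Finset.sum_congr rfl this, hd]
          rw [sum_digits_mod hp2 (t + 1) t, Nat.mod_eq_of_lt (t_lt_pow hp2 t (t + 1) le_rfl)]
        rw [Finset.mem_coe, hT, Finset.mem_filter]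
        constructor
        · rw [hS, Finset.Nat.mem_antidiagonalTuple]
          exact hsumval
        · intro l hl
          rw [Finset.sum_congr rfl fun j (_ : j ∈ Finset.univ) => hdig j l hl]
          exact hfsum ⟨l, hl⟩
      · intro e he
        rw [Finset.mem_coe, hT, Finset.mem_filter] at he
        have heS := he.1
        rw [hS, Finset.Nat.mem_antidiagonalTuple] at heS
        have hej : ∀ j, e j ≤ t := fun j =>
          heS ▸ Finset.single_le_sum (fun _ _ => Nat.zero_le _) (Finset.mem_univ j)
        funext j
        beta_reduce
        have : ∀ l ∈ Finset.range (t + 1),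
            (if h : l < t + 1 then e j / p ^ l % p else 0) * p ^ l
              = (e j / p ^ l % p) * p ^ l := by
          intro l hl
          rw [Finset.mem_range] at hl
          rw [dif_pos hl]
        rw [Finset.sum_congr rfl this, sum_digits_mod hp2 (t + 1) (e j),
          Nat.mod_eq_of_lt (lt_of_le_of_lt (hej j) (t_lt_pow hp2 t (t + 1) le_rfl))]
      · intro f hf
        rw [Finset.mem_coe, Fintype.mem_piFinset] at hf
        have hfsum : ∀ l : Fin (t + 1), ∑ j, f l j = d l := fun l =>
          Finset.Nat.mem_antidiagonalTuple.mp (hf l)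
        have hflt : ∀ (l : ℕ) (j : Fin (m + 1)),
            (if h : l < t + 1 then f ⟨l, h⟩ j else 0) < p := by
          intro l j
          split
          · next h =>
            calc f ⟨l, h⟩ j ≤ ∑ j', f ⟨l, h⟩ j' :=
                  Finset.single_le_sum (fun _ _ => Nat.zero_le _) (Finset.mem_univ j)
              _ = d l := hfsum ⟨l, h⟩
              _ < p := Nat.mod_lt _ (by omega)
          · omega
        funext l j
        beta_reduce
        rw [digit_of_sum hp2 (fun l' _ => hflt l' j) l.isLt, dif_pos l.isLt]
    rw [hbij, Fintype.card_piFinset]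
    rw [← Fin.prod_univ_eq_prod_range (fun l => (m + d l).choose (d l)) (t + 1)]
    apply Finset.prod_congr rfl
    intro l _
    rw [card_adt m (d l), add_comm (d l) m, Nat.choose_symm_add]
  -- inequality
  have hTS : T ⊆ S := Finset.filter_subset _ _
  have hle : T.card ≤ S.card := Finset.card_le_card hTS
  constructor
  · rw [hprod0, ← hcardT, ← hcardS]; exact hle
  · rw [hprod0, ← hcardT, ← hcardS]
    constructor
    · intro hcard e he
      have hTeqS : T = S := Finset.eq_of_subset_of_card_le hTS (le_of_eq hcard.symm)
      have heS : e ∈ S := by rw [hS, Finset.Nat.mem_antidiagonalTuple]; exact he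
      have heT : e ∈ T := hTeqS ▸ heS
      rw [hT, Finset.mem_filter] at heT
      rw [coprime_iff_divs hp ht e he, divs_iff_digits hp2 e he]
      intro l
      rcases Nat.lt_or_ge l (t + 1) with hl | hl
      · exact heT.2 l hl
      · have hej : ∀ j, e j ≤ t := fun j =>
          he ▸ Finset.single_le_sum (fun _ _ => Nat.zero_le _) (Finset.mem_univ j)
        have h1 : t / p ^ l = 0 := Nat.div_eq_of_lt (t_lt_pow hp2 t l hl)
        have h2 : ∀ j, e j / p ^ l = 0 := fun j =>
          Nat.div_eq_of_lt (lt_of_le_of_lt (hej j) (t_lt_pow hp2 t l hl))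
        have hz : (∑ j, e j / p ^ l % p) = 0 :=
          Finset.sum_eq_zero fun j _ => by rw [h2 j, Nat.zero_mod]
        rw [hz, h1, Nat.zero_mod]
    · intro hcop
      have hTeqS : T = S := by
        rw [hT]
        rw [Finset.filter_eq_self]
        intro e heS
        rw [hS, Finset.Nat.mem_antidiagonalTuple] at heS
        have := hcop e heS
        rw [coprime_iff_divs hp ht e heS, divs_iff_digits hp2 e heS] at this
        intro l _
        exact this l
      rw [hTeqS]
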